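/- Let V be a finite-dimensional real vector space carrying a reduced crystallographic root system Φ with a chosen base of simple roots α₁, …, α_r, and let W be the Weyl group (the group generated by the reflections in the roots of Φ), acting on V. For μ, λ ∈ V write μ ≤ λ if λ − μ = Σᵢ xᵢαᵢ with all xᵢ ≥ 0. If μ, λ ∈ V satisfy wμ ≤ λ for every w ∈ W, then the convex hull of the orbit Wμ is contained in the convex hull of the orbit Wλ. -/

import Mathlib

open Function

/-- A choice of base (system of simple roots) for a root pairing: the simple roots are
linearly independent, the indexing is injective, and every root is either a nonnegative or a
nonpositive linear combination of the simple roots. -/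
def RootPairing.IsBaseOf {ι V N : Type*} [AddCommGroup V] [Module ℝ V]
    [AddCommGroup N] [Module ℝ N] {r : ℕ}
    (P : RootPairing ι ℝ V N) (b : Fin r → ι) : Prop :=
  Function.Injective b ∧
  LinearIndependent ℝ (fun i => P.root (b i)) ∧
  ∀ j : ι, (∃ c : Fin r → ℝ, (∀ i, 0 ≤ c i) ∧ P.root j = ∑ i, c i • P.root (b i)) ∨
           (∃ c : Fin r → ℝ, (∀ i, c i ≤ 0) ∧ P.root j = ∑ i, c i • P.root (b i))

/-- A root system is a root pairing for which the roots and coroots span their ambient modules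
(the definition of `RootSystem` in the older Mathlib, where it was a structure). -/
structure RootSystem (ι R M N : Type*) [CommRing R] [AddCommGroup M] [Module R M]
    [AddCommGroup N] [Module R N] extends RootPairing ι R M N where
  span_root_eq_top : Submodule.span R (Set.range root) = ⊤
  span_coroot_eq_top : Submodule.span R (Set.range coroot) = ⊤

section Aux

variable {ι V N : Type*} [Fintype ι] [AddCommGroup V] [Module ℝ V]
    [FiniteDimensional ℝ V] [AddCommGroup N] [Module ℝ N]

lemma aux_root_mem (P : RootSystem ι ℝ V N) {w : V ≃ₗ[ℝ] V}
    (hw : w ∈ Subgroup.closure (Set.range P.reflection)) :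
    ∀ i, ∃ j, w (P.root i) = P.root j := by
  induction hw using Subgroup.closure_induction_left with
  | one => intro i; exact ⟨i, rfl⟩
  | mul_left x hx y hy ih =>
    obtain ⟨k, rfl⟩ := hx
    intro i
    obtain ⟨j, hj⟩ := ih i
    exact ⟨P.reflectionPerm k j, by rw [LinearEquiv.mul_apply, hj, P.root_reflectionPerm]⟩
  | inv_mul_cancel x hx y hy ih =>
    obtain ⟨k, rfl⟩ := hx
    intro i
    obtain ⟨j, hj⟩ := ih i
    exact ⟨P.reflectionPerm k j, by
      rw [P.reflection_inv, LinearEquiv.mul_apply, hj, P.root_reflectionPerm]⟩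

/-- The Weyl group of a root system is finite. -/
lemma aux_weylGroup_finite (P : RootSystem ι ℝ V N) :
    Finite (Subgroup.closure (Set.range P.reflection)) := by
  choose f hf using fun (w : Subgroup.closure (Set.range P.reflection)) => aux_root_mem P w.2
  refine Finite.of_injective f ?_
  intro w w' hww'
  have : (w.1 : V →ₗ[ℝ] V) = (w'.1 : V →ₗ[ℝ] V) := by
    apply LinearMap.ext_on P.span_root_eq_top
    rintro x ⟨i, rfl⟩
    show w.1 (P.root i) = w'.1 (P.root i)
    rw [hf w i, hf w' i, hww']
  exact Subtype.ext (LinearEquiv.toLinearMap_injective this)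

/-- Existence of a strictly dominant vector. -/
lemma aux_exists_dominant (P : RootSystem ι ℝ V N) {r : ℕ} (b : Fin r → ι)
    (hbli : LinearIndependent ℝ (fun i => P.root (b i))) :
    ∃ ξ : V, ∀ i : Fin r, 0 < P.coroot' (b i) ξ := by
  classical
  set α : Fin r → V := fun i => P.root (b i) with hα
  let L : V →ₗ[ℝ] EuclideanSpace ℝ (Fin r) :=
    ((EuclideanSpace.equiv (Fin r) ℝ).symm.toLinearEquiv.toLinearMap) ∘ₗ
      LinearMap.pi (fun i => P.RootForm (α i))
  have hLapp : ∀ (x : V) (i : Fin r), L x i = P.RootForm (α i) x := fun x i => rfl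
  have hLsurj : LinearMap.range L = ⊤ := by
    by_contra hne
    have hbot : (LinearMap.range L)ᗮ ≠ ⊥ := by
      intro hbot
      exact hne ((Submodule.orthogonal_eq_bot_iff).mp hbot)
    obtain ⟨v, hv, hv0⟩ := Submodule.exists_mem_ne_zero_of_ne_bot hbot
    set y : V := ∑ i, v i • α i with hy
    have hyx : ∀ x : V, P.RootForm y x = 0 := by
      intro x
      have h0 : inner ℝ (L x) v = (0 : ℝ) :=
        (Submodule.mem_orthogonal _ v).mp hv (L x) (LinearMap.mem_range_self L x)
      have : ∑ i, P.RootForm (α i) x * v i = 0 := by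
        simpa [PiLp.inner_apply, RCLike.inner_apply, hLapp, mul_comm] using h0
      calc P.RootForm y x = ∑ i, v i * P.RootForm (α i) x := by
            simp [hy, map_sum, mul_comm]
        _ = 0 := by rw [← this]; exact Finset.sum_congr rfl fun i _ => mul_comm _ _
    have hy0 : y ≠ 0 := by
      intro hy0
      apply hv0
      have hz : ∑ i, v i • α i = 0 := by rw [hy] at hy0; exact hy0
      have := Fintype.linearIndependent_iff.mp hbli v hz
      ext i
      exact this i
    have hymem : y ∈ P.rootSpan ℝ := by
      have : P.rootSpan ℝ = ⊤ := P.span_root_eq_top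
      rw [this]; trivial
    have := P.rootForm_pos_of_ne_zero hymem hy0
    rw [hyx y] at this
    exact lt_irrefl 0 this
  obtain ⟨ξ, hξ⟩ := (LinearMap.range_eq_top.mp hLsurj) (WithLp.toLp 2 (fun _ => (1 : ℝ)))
  refine ⟨ξ, fun i => ?_⟩
  have hRF1 : P.RootForm (α i) ξ = 1 := by
    rw [← hLapp ξ i, hξ]
  have hkey := congrArg (fun n => P.toLinearMap ξ n) (P.rootForm_self_smul_coroot (b i))
  have hL : P.toLinearMap ξ ((P.RootForm (α i) (α i)) • P.coroot (b i))
      = (P.RootForm (α i) (α i)) * P.coroot' (b i) ξ := by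
    simp [RootPairing.coroot']
  have hR : P.toLinearMap ξ ((2 : ℕ) • P.Polarization (α i))
      = 2 * P.RootForm (α i) ξ := by
    simp only [map_nsmul, RootPairing.Polarization_apply, map_sum, map_smul, smul_eq_mul]
    rw [P.rootForm_apply_apply]
    rw [nsmul_eq_mul]
    push_cast
    congr 1
  have hpos := P.rootForm_pos_of_ne_zero (Submodule.subset_span ⟨b i, rfl⟩) (P.ne_zero (b i))
  have heq : (P.RootForm (α i) (α i)) * P.coroot' (b i) ξ = 2 * P.RootForm (α i) ξ := by
    rw [← hL, ← hR]; exact hkey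
  rw [hRF1] at heq
  nlinarith [hpos]

end Aux

/-- **Lemma (worbit)**: Let `Φ` be a reduced crystallographic root system on a
finite-dimensional real vector space `V`, with base of simple roots `α₁, …, α_r` and Weyl
group `W`.  Write `μ ≤ λ` when `λ - μ` is a nonnegative combination of the simple roots.
If `μ, λ ∈ V` satisfy `w μ ≤ λ` for all `w ∈ W`, then `Conv(Wμ) ⊆ Conv(Wλ)`. -/
theorem stmt_4 {ι V N : Type*} [Fintype ι] [AddCommGroup V] [Module ℝ V]
    [FiniteDimensional ℝ V] [AddCommGroup N] [Module ℝ N]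
    (P : RootSystem ι ℝ V N) (hcrys : P.IsCrystallographic) (hred : P.IsReduced)
    (r : ℕ) (b : Fin r → ι) (hb : P.toRootPairing.IsBaseOf b)
    (μ lam : V)
    (h : ∀ w ∈ (Subgroup.closure (Set.range P.reflection)), ∃ x : Fin r → ℝ, (∀ i, 0 ≤ x i) ∧
      lam - w μ = ∑ i, x i • P.root (b i)) :
    convexHull ℝ ((fun w : V ≃ₗ[ℝ] V => w μ) '' ((Subgroup.closure (Set.range P.reflection)) : Set (V ≃ₗ[ℝ] V))) ⊆
      convexHull ℝ ((fun w : V ≃ₗ[ℝ] V => w lam) '' ((Subgroup.closure (Set.range P.reflection)) : Set (V ≃ₗ[ℝ] V))) := by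
  classical
  obtain ⟨hbinj, hbli, hbase⟩ := hb
  have hfin : Finite (Subgroup.closure (Set.range P.reflection)) := aux_weylGroup_finite P
  obtain ⟨ξ, hξ⟩ := aux_exists_dominant P b hbli
  set α : Fin r → V := fun i => P.root (b i) with hα
  set T : Set V := (fun w : V ≃ₗ[ℝ] V => w lam) '' ((Subgroup.closure (Set.range P.reflection)) : Set (V ≃ₗ[ℝ] V)) with hT
  apply convexHull_min ?_ (convex_convexHull ℝ T)
  rintro p ⟨w₀, hw₀, rfl⟩
  by_contra hK
  -- transfer to Euclidean space and separate
  set n := Module.finrank ℝ V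
  let e : V ≃ₗ[ℝ] EuclideanSpace ℝ (Fin n) :=
    (Module.finBasis ℝ V).equivFun.trans
      (EuclideanSpace.equiv (Fin n) ℝ).symm.toLinearEquiv
  have hTim : e '' (convexHull ℝ T) = convexHull ℝ (e '' T) :=
    e.toLinearMap.image_convexHull T
  have hTfin : (e '' T).Finite := by
    have : ((Subgroup.closure (Set.range P.reflection)) : Set (V ≃ₗ[ℝ] V)).Finite := Set.toFinite _
    exact (this.image _).image _
  have hnot : e (w₀ μ) ∉ convexHull ℝ (e '' T) := by
    rw [← hTim]
    rintro ⟨x, hx, hex⟩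
    apply hK
    show w₀ μ ∈ convexHull ℝ T
    rw [← e.injective hex]
    exact hx
  obtain ⟨f, u, hfu, hup⟩ :=
    geometric_hahn_banach_closed_point (convex_convexHull ℝ _)
      (hTfin.isClosed_convexHull (𝕜 := ℝ)) hnot
  set φ : V →ₗ[ℝ] ℝ := (f : EuclideanSpace ℝ (Fin n) →L[ℝ] ℝ).toLinearMap ∘ₗ e.toLinearMap
    with hφ
  have hφT : ∀ w ∈ (Subgroup.closure (Set.range P.reflection)), φ (w lam) < u := by
    intro w hw
    exact hfu (e (w lam)) (subset_convexHull ℝ _ ⟨w lam, ⟨w, hw, rfl⟩, rfl⟩)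
  have hφp : u < φ (w₀ μ) := hup
  -- maximize φ (w ξ) over the Weyl group
  haveI : Nonempty (Subgroup.closure (Set.range P.reflection)) := ⟨1⟩
  obtain ⟨ws, hmax⟩ := Finite.exists_max (fun w : (Subgroup.closure (Set.range P.reflection)) => φ (w.1 ξ))
  -- φ ∘ ws is dominant
  have hdom : ∀ i : Fin r, 0 ≤ φ (ws.1 (α i)) := by
    intro i
    set s : (Subgroup.closure (Set.range P.reflection)) := ⟨P.reflection (b i), Subgroup.subset_closure ⟨b i, rfl⟩⟩
    have hle := hmax (ws * s)
    have happ : (ws * s).1 ξ = ws.1 ξ - (P.coroot' (b i) ξ) • ws.1 (α i) := by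
      have : (ws * s).1 ξ = ws.1 (P.reflection (b i) ξ) := rfl
      rw [this, P.reflection_apply, map_sub, map_smul]
    rw [happ, map_sub, map_smul, smul_eq_mul] at hle
    have hcp := hξ i
    nlinarith [hle, hcp]
  -- apply the hypothesis to (ws)⁻¹ * w₀
  obtain ⟨x, hx0, hxeq⟩ := h ((ws.1)⁻¹ * w₀) (mul_mem (inv_mem ws.2) hw₀)
  have happ := congrArg (fun z => φ (ws.1 z)) hxeq
  have hLHS : φ (ws.1 (lam - ((ws.1)⁻¹ * w₀) μ)) = φ (ws.1 lam) - φ (w₀ μ) := by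
    rw [map_sub, map_sub]
    congr 2
    have h1 : ((ws.1)⁻¹ * w₀) μ = (ws.1)⁻¹ (w₀ μ) := rfl
    rw [h1]
    exact ws.1.apply_symm_apply (w₀ μ)
  have hRHS : φ (ws.1 (∑ i, x i • P.root (b i))) = ∑ i, x i * φ (ws.1 (α i)) := by
    rw [map_sum, map_sum]
    refine Finset.sum_congr rfl fun i _ => ?_
    rw [map_smul, map_smul, smul_eq_mul]
  rw [hLHS, hRHS] at happ
  have hsum : 0 ≤ ∑ i, x i * φ (ws.1 (α i)) :=
    Finset.sum_nonneg fun i _ => mul_nonneg (hx0 i) (hdom i)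
  have hlt := hφT ws.1 ws.2
  linarith
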